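/- arXiv:1103.0396 — 7 statements merged into one kernel-verified Lean document; each statement's English description precedes it below -/
import Mathlib

section
/- For any Q ⊆ 𝒫(M) (possibly containing ∅) and any downward-closed 𝒳 ⊆ 𝒫(M^{k+1}), the Hodges lift satisfies Q_ℋ(𝒳) = { Y ⊆ M^k : ∃F : Y → Q such that Y[F] ∈ 𝒳 }, where Q_ℋ(𝒳) is the downward closure of { h_Q(X) : X ∈ 𝒳 }. -/
/-- For any `Q ⊆ 𝒫(M)` (possibly containing `∅`) and any downward-closed
`𝒳 ⊆ 𝒫(M^{k+1})`, the Hodges lift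
`Q_ℋ(𝒳) = ↓{ h_Q(X) : X ∈ 𝒳 }` equals
`{ Y : ∃ F : Y → Q, Y[F] ∈ 𝒳 }`. Membership of `Y` in the downward closure
is expressed as `∃ X ∈ 𝒳, Y ⊆ h_Q(X)`. -/
theorem hodges_lift_eq {M : Type*} {k : ℕ} (Q : Set (Set M))
    (𝒳 : Set (Set ((Fin k → M) × M)))
    (hdc : ∀ A B : Set ((Fin k → M) × M), A ⊆ B → B ∈ 𝒳 → A ∈ 𝒳) :
    {Y : Set (Fin k → M) | ∃ X ∈ 𝒳, Y ⊆ {a | {b | (a, b) ∈ X} ∈ Q}} =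
    {Y : Set (Fin k → M) | ∃ F : (Fin k → M) → Set M,
      (∀ a ∈ Y, F a ∈ Q) ∧
      {p : (Fin k → M) × M | p.1 ∈ Y ∧ p.2 ∈ F p.1} ∈ 𝒳} := by
  ext Y
  simp only [Set.mem_setOf_eq]
  constructor
  · rintro ⟨X, hX, hY⟩
    refine ⟨fun a => {b | (a, b) ∈ X}, fun a ha => hY ha, ?_⟩
    exact hdc _ X (fun p hp => hp.2) hX
  · rintro ⟨F, hF, hX⟩
    refine ⟨_, hX, fun a ha => ?_⟩
    have : {b | a ∈ Y ∧ b ∈ F a} = F a := by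
      ext b; simp [ha]
    simpa [Set.mem_setOf_eq, this] using hF a ha
end

section
/- The Hodges lift of the existential quantifier satisfies: for downward-closed 𝒳 ⊆ 𝒫(M^{k+1}), 𝓛(∃)(𝒳) = { Y ⊆ M^k : ∃ f : Y → M such that Y[f] ∈ 𝒳 }, where Y[f] = { (ā, f(ā)) : ā ∈ Y }. -/
/-- The Hodges lift of the existential quantifier `∃_M = {A ⊆ M : A ≠ ∅}`:
for downward-closed `𝒳 ⊆ 𝒫(M^{k+1})`,
`𝓛(∃)(𝒳) = { Y : ∃ f : Y → M, Y[f] ∈ 𝒳 }`,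
where `Y[f] = { (ā, f(ā)) : ā ∈ Y }` and membership of `Y` in the lift
`↓{ h_∃(X) : X ∈ 𝒳 }` is expressed as `∃ X ∈ 𝒳, Y ⊆ h_∃(X)`. -/
theorem hodges_lift_exists {M : Type*} {k : ℕ} [Nonempty M]
    (𝒳 : Set (Set ((Fin k → M) × M)))
    (hdc : ∀ A B : Set ((Fin k → M) × M), A ⊆ B → B ∈ 𝒳 → A ∈ 𝒳) :
    {Y : Set (Fin k → M) | ∃ X ∈ 𝒳, Y ⊆ {a | {b | (a, b) ∈ X}.Nonempty}} =
    {Y : Set (Fin k → M) | ∃ f : (Fin k → M) → M,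
      {p : (Fin k → M) × M | p.1 ∈ Y ∧ p.2 = f p.1} ∈ 𝒳} := by
  ext Y
  constructor
  · rintro ⟨X, hX, hYX⟩
    classical
    refine ⟨fun a => if h : a ∈ Y then (hYX h).choose else Classical.arbitrary M, ?_⟩
    refine hdc _ X ?_ hX
    rintro ⟨a, b⟩ ⟨ha, hb⟩
    simp only [ha, dif_pos] at hb
    exact hb ▸ (hYX ha).choose_spec
  · rintro ⟨f, hf⟩
    refine ⟨_, hf, fun a ha => ⟨f a, ha, rfl⟩⟩
end

section
/- The Hodges lift commutes with iteration of monotone quantifiers: 𝓛(Q₁Q₂) = 𝓛(Q₁) ∘ 𝓛(Q₂), where Q₁Q₂ is the iteration quantifier, for downward-closed input families. -/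
/-- The Hodges lift commutes with iteration of monotone quantifiers:
`𝓛(Q₁Q₂) = 𝓛(Q₁) ∘ 𝓛(Q₂)` on downward-closed families.  Using the
characterization of the lift of a monotone quantifier via witness functions,
this says: for monotone `Q₁, Q₂ ⊆ 𝒫(M)` and downward-closed
`𝒳 ⊆ 𝒫(M^{k+2})`,
`{ Z : ∃ H : Z → Q₁Q₂, Z[H] ∈ 𝒳 } =
 { Z : ∃ G : Z → Q₁, ∃ F : Z[G] → Q₂, Z[G][F] ∈ 𝒳 }`,
where `R ∈ Q₁Q₂ ↔ { a : R_a ∈ Q₂ } ∈ Q₁`. -/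
theorem hodges_lift_iteration {M : Type*} {k : ℕ} (Q₁ Q₂ : Set (Set M))
    (h₁ : ∀ A B : Set M, A ∈ Q₁ → A ⊆ B → B ∈ Q₁)
    (h₂ : ∀ A B : Set M, A ∈ Q₂ → A ⊆ B → B ∈ Q₂)
    (𝒳 : Set (Set ((Fin k → M) × M × M)))
    (hdc : ∀ A B : Set ((Fin k → M) × M × M), A ⊆ B → B ∈ 𝒳 → A ∈ 𝒳) :
    {Z : Set (Fin k → M) | ∃ H : (Fin k → M) → Set (M × M),
      (∀ s ∈ Z, {a : M | {b : M | (a, b) ∈ H s} ∈ Q₂} ∈ Q₁) ∧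
      {p : (Fin k → M) × M × M | p.1 ∈ Z ∧ p.2 ∈ H p.1} ∈ 𝒳} =
    {Z : Set (Fin k → M) | ∃ G : (Fin k → M) → Set M,
      (∀ s ∈ Z, G s ∈ Q₁) ∧
      ∃ F : (Fin k → M) × M → Set M,
        (∀ s ∈ Z, ∀ a ∈ G s, F (s, a) ∈ Q₂) ∧
        {p : (Fin k → M) × M × M |
          p.1 ∈ Z ∧ p.2.1 ∈ G p.1 ∧ p.2.2 ∈ F (p.1, p.2.1)} ∈ 𝒳} := by
  ext Z
  constructor
  · rintro ⟨H, hH, hX⟩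
    refine ⟨fun s => {a : M | {b : M | (a, b) ∈ H s} ∈ Q₂}, hH,
      fun p => {b : M | (p.2, b) ∈ H p.1}, fun s _ a ha => ha, ?_⟩
    refine hdc _ _ ?_ hX
    rintro ⟨s, a, b⟩ ⟨hs, _, hb⟩
    exact ⟨hs, hb⟩
  · rintro ⟨G, hG, F, hF, hX⟩
    refine ⟨fun s => {q : M × M | q.1 ∈ G s ∧ q.2 ∈ F (s, q.1)}, ?_, ?_⟩
    · intro s hs
      refine h₁ (G s) _ (hG s hs) ?_
      intro a ha
      exact h₂ (F (s, a)) _ (hF s hs a ha) (fun b hb => ⟨ha, hb⟩)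
    · refine hdc _ _ ?_ hX
      rintro ⟨s, a, b⟩ ⟨hs, ha, hb⟩
      exact ⟨hs, ha, hb⟩
end

section
/- For a monotone quantifier Q of type ⟨1⟩ and teams X: M,X ⊨ Qx φ (team semantics: ∃F : X → Q with M,X[F/x] ⊨ φ) holds if and only if M,s ⊨ Qx φ (Tarskian: {a : M,s[a/x] ⊨ φ} ∈ Q) for every s ∈ X, provided φ is an L(Q)-formula satisfying the flatness property (M,X' ⊨ φ iff ∀s ∈ X', M,s ⊨ φ). -/
/-- For a monotone quantifier `Q` of type `⟨1⟩` and a flat team property `P`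
(team satisfaction is pointwise Tarskian satisfaction):
`M,X ⊨ Qx φ` in team semantics (i.e. `∃ F : X → Q` with `P(X[F/x])`)
iff for every `s ∈ X` the Tarskian condition `{a : P({s[a/x]})} ∈ Q` holds. -/
theorem team_generalized_quantifier_flat {V M : Type*} [DecidableEq V]
    (Q : Set (Set M)) (hmono : ∀ A B : Set M, A ∈ Q → A ⊆ B → B ∈ Q)
    (x : V) (X : Set (V → M)) (P : Set (V → M) → Prop)
    (hflat : ∀ X' : Set (V → M), P X' ↔ ∀ s ∈ X', P {s}) :
    (∃ F : (V → M) → Set M, (∀ s ∈ X, F s ∈ Q) ∧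
        P {t | ∃ s ∈ X, ∃ a ∈ F s, t = Function.update s x a}) ↔
    (∀ s ∈ X, {a : M | P {Function.update s x a}} ∈ Q) := by
  constructor
  · rintro ⟨F, hFQ, hP⟩ s hs
    refine hmono (F s) _ (hFQ s hs) ?_
    intro a ha
    exact (hflat _).1 hP _ ⟨s, hs, a, ha, rfl⟩
  · intro h
    refine ⟨fun s => {a : M | P {Function.update s x a}}, h, ?_⟩
    rw [hflat]
    rintro t ⟨s, hs, a, ha, rfl⟩
    exact ha
end

section
/- For a monotone quantifier Q, the non-monotone-style truth condition with the largeness requirement is equivalent to the plain condition: there exists F : X → 𝒫(M) with (1) M,X[F/x] ⊨ φ and (2) for every F' ≥ F with M,X[F'/x] ⊨ φ, F'(s) ∈ Q for all s ∈ X — iff there exists F : X → Q with M,X[F/x] ⊨ φ. -/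
/-- For a monotone quantifier `Q ⊆ 𝒫(M)`, the largeness-augmented truth
condition for `Qx φ` is equivalent to the plain one: there exists
`F : X → 𝒫(M)` with (1) `P(X[F/x])` and (2) for every `F' ≥ F` with
`P(X[F'/x])` one has `F'(s) ∈ Q` for all `s ∈ X` — iff there exists
`F : X → Q` with `P(X[F/x])`. -/
theorem monotone_largeness_iff_plain {V M : Type*} [DecidableEq V]
    (Q : Set (Set M)) (hmono : ∀ A B : Set M, A ∈ Q → A ⊆ B → B ∈ Q)
    (x : V) (X : Set (V → M)) (P : Set (V → M) → Prop) :
    (∃ F : (V → M) → Set M,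
        P {t | ∃ s ∈ X, ∃ a ∈ F s, t = Function.update s x a} ∧
        ∀ F' : (V → M) → Set M, (∀ s ∈ X, F s ⊆ F' s) →
          P {t | ∃ s ∈ X, ∃ a ∈ F' s, t = Function.update s x a} →
          ∀ s ∈ X, F' s ∈ Q) ↔
    (∃ F : (V → M) → Set M, (∀ s ∈ X, F s ∈ Q) ∧
        P {t | ∃ s ∈ X, ∃ a ∈ F s, t = Function.update s x a}) := by
  constructor
  · rintro ⟨F, hP, hL⟩
    exact ⟨F, hL F (fun s _ => le_refl _) hP, hP⟩
  · rintro ⟨F, hQ, hP⟩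
    exact ⟨F, hP, fun F' hle _ s hs => hmono _ _ (hQ s hs) (hle s hs)⟩
end

section
/- Let M = {0,1,2} and R = {(0,0)} ∪ ({0,1}×{1,2}). Then R ∈ Br^S(∃^{=1}, ∃) (witnessed by {0}×{0,1,2} maximal in R), but there is no A ∈ ∃^{=1} and B ≠ ∅ with A×B ⊆ R such that A satisfies the largeness condition (every A' ⊇ A with A'×B ⊆ R has |A'| = 1); i.e., the team-semantic condition for ∃^{=1}x ∃y/x R(x,y) on the singleton team fails while Br^S holds. -/
/-- `A × B` is maximal in `R`. -/
def MaximalIn {M : Type*} (A B : Set M) (R : Set (M × M)) : Prop :=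
  A ×ˢ B ⊆ R ∧ (∀ A' : Set M, A ⊂ A' → ¬ A' ×ˢ B ⊆ R) ∧
    (∀ B' : Set M, B ⊂ B' → ¬ A ×ˢ B' ⊆ R)

/-- The relation `R = {(0,0)} ∪ ({0,1} × {1,2})` on `M = {0,1,2}`. -/
def R13 : Set (Fin 3 × Fin 3) :=
  {((0 : Fin 3), (0 : Fin 3))} ∪ ({0, 1} : Set (Fin 3)) ×ˢ ({1, 2} : Set (Fin 3))

lemma mem_R13 (p : Fin 3 × Fin 3) :
    p ∈ R13 ↔ p = (0, 0) ∨ ((p.1 = 0 ∨ p.1 = 1) ∧ (p.2 = 1 ∨ p.2 = 2)) := by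
  simp [R13, Set.mem_prod]

/-- `R ∈ Br^S(∃^{=1}, ∃)`, but the team-semantic condition for
`∃^{=1}x ∃y/x R(x,y)` on the singleton team fails: there is no `A` with
`|A| = 1` and some nonempty `B` with `A×B ⊆ R`, such that `A` satisfies the
largeness condition — every `A' ⊇ A` for which some nonempty `B'` has
`A'×B' ⊆ R` still has `|A'| = 1`. -/
theorem sher_branching_counterexample :
    (∃ A : Set (Fin 3), A.encard = 1 ∧
      ∃ B : Set (Fin 3), B.Nonempty ∧ MaximalIn A B R13) ∧
    ¬ ∃ A : Set (Fin 3), A.encard = 1 ∧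
        (∃ B : Set (Fin 3), B.Nonempty ∧ A ×ˢ B ⊆ R13) ∧
        (∀ A' : Set (Fin 3), A ⊆ A' →
          (∃ B' : Set (Fin 3), B'.Nonempty ∧ A' ×ˢ B' ⊆ R13) →
          A'.encard = 1) := by
  constructor
  · refine ⟨{0}, Set.encard_singleton 0, Set.univ, ⟨0, trivial⟩, ?_, ?_, ?_⟩
    · rintro ⟨x, y⟩ ⟨hx, -⟩
      rcases hx with rfl
      rw [mem_R13]
      fin_cases y <;> simp
    · intro A' hA' hsub
      obtain ⟨a, haA', ha0⟩ := Set.exists_of_ssubset hA'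
      have h : (a, (0 : Fin 3)) ∈ R13 := hsub ⟨haA', trivial⟩
      rw [mem_R13] at h
      rcases h with h | ⟨-, h | h⟩
      · exact ha0 (by simpa using congrArg Prod.fst h)
      · exact absurd h (by simp)
      · exact absurd h (by simp)
    · intro B' hB' _
      exact hB'.2 (Set.subset_univ B')
  · rintro ⟨A, hA1, ⟨B, ⟨b, hb⟩, hAB⟩, hlarge⟩
    obtain ⟨a, rfl⟩ := Set.encard_eq_one.mp hA1
    have hab : (a, b) ∈ R13 := hAB ⟨rfl, hb⟩
    rw [mem_R13] at hab
    have ha : a = 0 ∨ a = 1 := by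
      rcases hab with h | ⟨h, -⟩
      · exact Or.inl (by simpa using congrArg Prod.fst h)
      · exact h
    have hsub : ({a} : Set (Fin 3)) ⊆ {0, 1} := by
      rintro x rfl; exact ha
    have h2 := hlarge {0, 1} hsub ⟨{1}, ⟨1, rfl⟩, ?_⟩
    · rw [Set.encard_pair (by decide : (0 : Fin 3) ≠ 1)] at h2
      exact absurd h2 (by decide)
    · rintro ⟨x, y⟩ ⟨hx, hy⟩
      rcases hy with rfl
      rw [mem_R13]
      exact Or.inr ⟨hx, Or.inl rfl⟩
end

section
/- Fagin's theorem on lossless decomposition: X ⊨ x̄ ↠ ȳ if and only if X = (X↾x̄ȳ) ⋈ (X↾x̄z̄), where z̄ = dom(X) ∖ {x̄,ȳ} and ⋈ is natural join. -/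
lemma restrict_eq_iff_eqOn {V M : Type*} (A : Set V) (f g : V → M) :
    A.restrict f = A.restrict g ↔ Set.EqOn f g A := by
  constructor
  · intro h v hv
    exact congrFun h ⟨v, hv⟩
  · intro h
    funext v
    exact h v.2

/-- Fagin's theorem on lossless decomposition: a team `X` satisfies the
multivalued dependence `x̄ ↠ ȳ` iff `X = (X↾x̄ȳ) ⋈ (X↾x̄z̄)`, where
`z̄ = dom(X) ∖ (x̄ ∪ ȳ)` and the natural join consists of all assignments
whose restrictions to `x̄ȳ` and `x̄z̄` come from `X`. -/
theorem fagin_lossless_decomposition {V M : Type*} (X : Set (V → M))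
    (xs ys : Set V) (hdisj : Disjoint xs ys) :
    (∀ s ∈ X, ∀ s' ∈ X, Set.EqOn s s' xs →
      ∃ s₀ ∈ X, Set.EqOn s₀ s (xs ∪ ys) ∧ Set.EqOn s₀ s' (xs ∪ ys)ᶜ) ↔
    X = {s : V → M |
      (xs ∪ ys).restrict s ∈ (xs ∪ ys).restrict '' X ∧
      (xs ∪ (xs ∪ ys)ᶜ).restrict s ∈ (xs ∪ (xs ∪ ys)ᶜ).restrict '' X} := by
  constructor
  · intro hmvd
    ext s
    constructor
    · intro hs
      exact ⟨⟨s, hs, rfl⟩, ⟨s, hs, rfl⟩⟩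
    · rintro ⟨⟨t, ht, htr⟩, ⟨t', ht', htr'⟩⟩
      rw [restrict_eq_iff_eqOn] at htr htr'
      have hxs : Set.EqOn t t' xs := fun v hv =>
        (htr (Or.inl hv)).trans ((htr' (Or.inl hv)).symm)
      obtain ⟨s₀, hs₀, h1, h2⟩ := hmvd t ht t' ht' hxs
      have : s₀ = s := by
        funext v
        by_cases hv : v ∈ xs ∪ ys
        · exact (h1 hv).trans (htr hv)
        · exact (h2 hv).trans (htr' (Or.inr hv))
      exact this ▸ hs₀
  · intro heq s hs s' hs' hxs
    classical
    set s₀ : V → M := fun v => if v ∈ xs ∪ ys then s v else s' v with hs₀def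
    have h1 : Set.EqOn s₀ s (xs ∪ ys) := fun v hv => if_pos hv
    have h2 : Set.EqOn s₀ s' (xs ∪ ys)ᶜ := fun v hv => if_neg hv
    refine ⟨s₀, ?_, h1, h2⟩
    rw [heq]
    refine ⟨⟨s, hs, ?_⟩, ⟨s', hs', ?_⟩⟩
    · rw [restrict_eq_iff_eqOn]; exact fun v hv => (h1 hv).symm
    · rw [restrict_eq_iff_eqOn]
      rintro v (hv | hv)
      · exact (hxs hv).symm.trans ((h1 (Or.inl hv)).symm)
      · exact (h2 hv).symm
end
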